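/- Setting φ₀(z) = -2a tanh(az) with a > 0, the function φ₀ satisfies the ODE -φ₀''' + φ₀φ₀'' + (φ₀')² = 0 on ℝ, and ∫_{-∞}^{+∞} (1/3)(φ₀'(z))² dz = 16a³/9. -/

import Mathlib

open MeasureTheory Real Filter Set

lemma myHasDerivAt_tanh (x : ℝ) : HasDerivAt Real.tanh (1 - Real.tanh x ^ 2) x := by
  have hc : Real.cosh x ≠ 0 := (Real.cosh_pos x).ne'
  have h := (Real.hasDerivAt_sinh x).div (Real.hasDerivAt_cosh x) hc
  have heq : (Real.cosh x * Real.cosh x - Real.sinh x * Real.sinh x) / Real.cosh x ^ 2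
      = 1 - Real.tanh x ^ 2 := by
    rw [Real.tanh_eq_sinh_div_cosh]
    have key := Real.cosh_sq_sub_sinh_sq x
    field_simp
  have hfun : (Real.sinh / Real.cosh : ℝ → ℝ) = Real.tanh := by
    funext y; rw [Pi.div_apply, Real.tanh_eq_sinh_div_cosh]
  rw [hfun, heq] at h
  exact h

lemma tanh_exp_eq (x : ℝ) :
    Real.tanh x = (1 - Real.exp (-2 * x)) / (1 + Real.exp (-2 * x)) := by
  have h1 : Real.exp (-2 * x) = Real.exp (-x) * Real.exp (-x) := by
    rw [← Real.exp_add]; ring_nf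
  have h2 : Real.exp x * Real.exp (-x) = 1 := by
    rw [← Real.exp_add]; simp
  have hc : Real.cosh x ≠ 0 := (Real.cosh_pos x).ne'
  have hd : (1 : ℝ) + Real.exp (-2 * x) ≠ 0 := by positivity
  rw [Real.tanh_eq_sinh_div_cosh, Real.sinh_eq, Real.cosh_eq]
  rw [div_eq_div_iff (by rw [← Real.cosh_eq]; exact hc) hd]
  linear_combination Real.exp x * h1 + Real.exp (-x) * h2

lemma tendsto_tanh_atTop : Tendsto Real.tanh atTop (nhds 1) := by
  have he : Tendsto (fun x : ℝ => Real.exp (-2 * x)) atTop (nhds 0) :=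
    Real.tendsto_exp_atBot.comp (tendsto_id.const_mul_atTop_of_neg (by norm_num))
  have h : Tendsto (fun x : ℝ => (1 - Real.exp (-2 * x)) / (1 + Real.exp (-2 * x))) atTop
      (nhds ((1 - 0) / (1 + 0))) :=
    (tendsto_const_nhds.sub he).div (tendsto_const_nhds.add he) (by norm_num)
  simp only [sub_zero, add_zero, div_one] at h
  refine h.congr fun x => (tanh_exp_eq x).symm

lemma tendsto_tanh_atBot : Tendsto Real.tanh atBot (nhds (-1)) := by
  have h := (tendsto_tanh_atTop.comp tendsto_neg_atBot_atTop).neg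
  simp only [Function.comp] at h
  exact h.congr fun x => by rw [← Real.tanh_neg, neg_neg]

lemma one_sub_tanh_sq (u : ℝ) : 1 - Real.tanh u ^ 2 = (Real.cosh u ^ 2)⁻¹ := by
  have hc : Real.cosh u ≠ 0 := (Real.cosh_pos u).ne'
  rw [Real.tanh_eq_sinh_div_cosh]
  have key := Real.cosh_sq_sub_sinh_sq u
  field_simp
  try nlinarith [key]

/-- φ₀(z) = -2a tanh(az) satisfies -φ₀''' + φ₀φ₀'' + (φ₀')² = 0 and
(1/3)∫(φ₀')² = 16a³/9. -/
theorem tanh_profile (a : ℝ) (ha : 0 < a) :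
    let φ : ℝ → ℝ := fun z => -2 * a * Real.tanh (a * z)
    (∀ z, -(deriv^[3] φ z) + φ z * deriv^[2] φ z + (deriv φ z) ^ 2 = 0) ∧
      (1 / 3) * (∫ z : ℝ, (deriv φ z) ^ 2) = 16 * a ^ 3 / 9 := by
  intro φ
  set t : ℝ → ℝ := fun z => Real.tanh (a * z) with ht_def
  have ht : ∀ z, HasDerivAt t ((1 - t z ^ 2) * a) z := by
    intro z
    have h1 : HasDerivAt (fun z : ℝ => a * z) (a * 1) z := (hasDerivAt_id z).const_mul a
    have := (myHasDerivAt_tanh (a * z)).comp z h1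
    simpa [ht_def, Function.comp_def] using this
  set d1 : ℝ → ℝ := fun z => -2 * a ^ 2 * (1 - t z ^ 2) with hd1_def
  set d2 : ℝ → ℝ := fun z => 4 * a ^ 3 * (t z - t z ^ 3) with hd2_def
  have hφ' : ∀ z, HasDerivAt φ (d1 z) z := by
    intro z
    have := (ht z).const_mul (-2 * a)
    refine this.congr_deriv ?_
    simp only [hd1_def]; ring
  have hd1 : ∀ z, HasDerivAt d1 (d2 z) z := by
    intro z
    have := (((ht z).pow 2).const_sub 1).const_mul (-2 * a ^ 2)
    refine this.congr_deriv ?_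
    simp only [hd2_def]; push_cast; ring
  have hd2 : ∀ z, HasDerivAt d2 (4 * a ^ 4 * ((1 - t z ^ 2) * (1 - 3 * t z ^ 2))) z := by
    intro z
    have := (((ht z).sub ((ht z).pow 3))).const_mul (4 * a ^ 3)
    refine this.congr_deriv ?_
    push_cast; ring
  have hDφ : deriv φ = d1 := funext fun z => (hφ' z).deriv
  have hDd1 : deriv d1 = d2 := funext fun z => (hd1 z).deriv
  constructor
  · intro z
    have h3 : deriv^[3] φ z = 4 * a ^ 4 * ((1 - t z ^ 2) * (1 - 3 * t z ^ 2)) := by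
      show deriv (deriv (deriv φ)) z = _
      rw [hDφ, hDd1]; exact (hd2 z).deriv
    have h2 : deriv^[2] φ z = d2 z := by
      show deriv (deriv φ) z = _
      rw [hDφ, hDd1]
    rw [h3, h2, hDφ]
    show -(4 * a ^ 4 * ((1 - t z ^ 2) * (1 - 3 * t z ^ 2)))
        + (-2 * a * t z) * (4 * a ^ 3 * (t z - t z ^ 3)) + (-2 * a ^ 2 * (1 - t z ^ 2)) ^ 2 = 0
    ring
  · rw [hDφ]
    -- the integrand
    set f : ℝ → ℝ := fun z => (d1 z) ^ 2 with hf_def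
    have hf_eq : ∀ z, f z = 4 * a ^ 4 * ((1 - t z ^ 2)) ^ 2 := by
      intro z; simp only [hf_def, hd1_def]; ring
    -- antiderivative
    set G : ℝ → ℝ := fun z => 4 * a ^ 3 * (t z - t z ^ 3 / 3) with hG_def
    have hG : ∀ z, HasDerivAt G (f z) z := by
      intro z
      have := ((ht z).sub (((ht z).pow 3).div_const 3)).const_mul (4 * a ^ 3)
      refine this.congr_deriv ?_
      simp only [hf_def, hd1_def]; push_cast; ring
    -- continuity of f
    have cont_t : Continuous t := continuous_iff_continuousAt.2 fun z => (ht z).continuousAt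
    have hcont : Continuous f :=
      ((continuous_const.mul (continuous_const.sub (cont_t.pow 2))).pow 2)
    -- bound : for z ≥ 0, f z ≤ 16 a^4 exp (-(2a) z)
    have hbound : ∀ z : ℝ, 0 ≤ z → |f z| ≤ 16 * a ^ 4 * Real.exp (-(2 * a) * z) := by
      intro z hz
      have h01 : 0 < 1 - t z ^ 2 := by
        rw [ht_def, one_sub_tanh_sq]; positivity
      have h1 : 1 - t z ^ 2 ≤ 1 := by
        nlinarith [sq_nonneg (t z)]
      have h2 : 1 - t z ^ 2 ≤ 4 * Real.exp (-(2 * a) * z) := by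
        rw [ht_def, one_sub_tanh_sq]
        have hcosh : Real.exp (a * z) / 2 ≤ Real.cosh (a * z) := by
          rw [Real.cosh_eq]
          have := Real.exp_pos (-(a * z))
          linarith
        have hcp : (0:ℝ) < Real.exp (a * z) / 2 := by positivity
        have hsq : (Real.exp (a * z) / 2) ^ 2 ≤ Real.cosh (a * z) ^ 2 := by
          nlinarith [Real.cosh_pos (a * z)]
        have hinv : (Real.cosh (a * z) ^ 2)⁻¹ ≤ ((Real.exp (a * z) / 2) ^ 2)⁻¹ := by
          apply inv_anti₀ (by positivity) hsq
        refine hinv.trans (le_of_eq ?_)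
        rw [show -(2 * a) * z = -(a * z) + -(a * z) by ring, Real.exp_add, Real.exp_neg]
        have he0 : Real.exp (a * z) ≠ 0 := (Real.exp_pos _).ne'
        field_simp
        ring
      have hfz : 0 ≤ f z := by rw [hf_eq]; positivity
      rw [abs_of_nonneg hfz, hf_eq]
      have hmul := mul_le_mul h1 h2 h01.le zero_le_one
      nlinarith [pow_pos ha 4, Real.exp_pos (-(2 * a) * z)]
    -- even
    have heven : ∀ z, f (-z) = f z := by
      intro z
      simp only [hf_eq, ht_def, mul_neg, Real.tanh_neg]
      ring
    -- integrability on Ioi 0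
    have hIoi : IntegrableOn f (Ioi (0:ℝ)) := by
      apply integrable_of_isBigO_exp_neg (mul_pos two_pos ha) hcont.continuousOn
      apply Asymptotics.IsBigO.of_bound (16 * a ^ 4)
      filter_upwards [eventually_ge_atTop (0:ℝ)] with z hz
      rw [Real.norm_eq_abs, Real.norm_eq_abs, abs_of_pos (Real.exp_pos _)]
      exact hbound z hz
    have hIci : IntegrableOn f (Ici (0:ℝ)) :=
      (integrableOn_Ici_iff_integrableOn_Ioi (by simp)).2 hIoi
    have hIic : IntegrableOn f (Iic (0:ℝ)) := by
      have h1 : Integrable ((Ici (0:ℝ)).indicator f) :=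
        (integrable_indicator_iff measurableSet_Ici).2 hIci
      have h2 := h1.comp_neg
      have h3 : (fun x => (Ici (0:ℝ)).indicator f (-x)) = (Iic (0:ℝ)).indicator f := by
        funext x
        by_cases hx : x ≤ 0
        · rw [Set.indicator_of_mem (by simpa using hx), Set.indicator_of_mem (by simpa using hx)]
          exact heven x
        · rw [Set.indicator_of_notMem (by simpa using hx),
            Set.indicator_of_notMem (by simpa using hx)]
      rw [h3] at h2
      exact (integrable_indicator_iff measurableSet_Iic).1 h2
    have hInt : Integrable f := by
      rw [← integrableOn_univ, ← Set.Iic_union_Ioi (a := (0:ℝ))]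
      exact hIic.union hIoi
    -- limits of G
    have hta : Tendsto t atTop (nhds 1) :=
      tendsto_tanh_atTop.comp (tendsto_id.const_mul_atTop ha)
    have htb : Tendsto t atBot (nhds (-1)) := by
      apply tendsto_tanh_atBot.comp
      exact tendsto_id.const_mul_atBot ha
    have hGtop : Tendsto G atTop (nhds (8 * a ^ 3 / 3)) := by
      have := ((hta.sub ((hta.pow 3).div_const 3)).const_mul (4 * a ^ 3))
      convert this using 2
      norm_num; ring
    have hGbot : Tendsto G atBot (nhds (-(8 * a ^ 3 / 3))) := by
      have := ((htb.sub ((htb.pow 3).div_const 3)).const_mul (4 * a ^ 3))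
      convert this using 2
      norm_num; ring
    have key := integral_of_hasDerivAt_of_tendsto hG hInt hGbot hGtop
    rw [key]
    ring
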